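/- For every ε > 0 there exists a constant C > 0 such that for all real X ≥ 2, the number N(X) of 6-tuples of integers (x₁,x₂,x₃,y₁,y₂,y₃) with 1 ≤ x_i, y_i ≤ X for all i satisfying the simultaneous equations x₁x₂x₃ + 2(x₁+x₂+x₃) = y₁y₂y₃ + 2(y₁+y₂+y₃) and x₁x₂ + x₂x₃ + x₃x₁ = y₁y₂ + y₂y₃ + y₃y₁ satisfies |N(X) − 6·⌊X⌋³| ≤ C·X^{2+ε}. -/

import Mathlib

open Finset

lemma divisor_bound (ε : ℝ) (hε : 0 < ε) :
    ∃ C : ℝ, 1 ≤ C ∧ ∀ m : ℕ, m ≠ 0 → (m.divisors.card : ℝ) ≤ C * (m : ℝ) ^ ε := by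
  have hlog2 : (0:ℝ) < Real.log 2 := Real.log_pos (by norm_num)
  set K : ℝ := max 1 (16 / (ε * Real.log 2) ^ 2) with hK
  have hK1 : 1 ≤ K := le_max_left _ _
  have hK0 : (0:ℝ) ≤ K := by linarith
  set P : ℕ := ⌈(2:ℝ) ^ (1/ε)⌉₊ with hP
  refine ⟨K ^ P, one_le_pow₀ hK1, ?_⟩
  intro m hm
  have key : ∀ p ∈ m.primeFactors,
      ((m.factorization p + 1 : ℕ) : ℝ) ≤
        (if p < P then K else 1) * ((p : ℝ) ^ (m.factorization p : ℕ)) ^ ε := by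
    intro p hp
    have hpp : p.Prime := Nat.prime_of_mem_primeFactors hp
    have hp2 : (2:ℝ) ≤ (p:ℝ) := by exact_mod_cast hpp.two_le
    set a : ℕ := m.factorization p with ha
    have ha1 : 1 ≤ a := (Nat.Prime.factorization_pos_of_dvd hpp hm
      (Nat.dvd_of_mem_primeFactors hp))
    have ha1' : (1:ℝ) ≤ (a:ℝ) := by exact_mod_cast ha1
    have hpa : ((p:ℝ) ^ a) ^ ε = ((p:ℝ) ^ ε) ^ a := by
      rw [← Real.rpow_natCast ((p:ℝ)) a, ← Real.rpow_natCast ((p:ℝ)^ε) a,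
        ← Real.rpow_mul (by positivity), ← Real.rpow_mul (by positivity), mul_comm]
    by_cases hcase : p < P
    · rw [if_pos hcase]
      have h2a : ((2:ℝ) ^ ε) ^ a ≤ ((p:ℝ) ^ ε) ^ a := by
        apply pow_le_pow_left₀ (by positivity)
        exact Real.rpow_le_rpow (by norm_num) hp2 hε.le
      have hexp : ((2:ℝ) ^ ε) ^ a = Real.exp ((a : ℝ) * (ε * Real.log 2)) := by
        rw [← Real.rpow_natCast ((2:ℝ)^ε) a, ← Real.rpow_mul (by norm_num),
          Real.rpow_def_of_pos (by norm_num)]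
        ring_nf
      have hquad : ((a:ℝ) * (ε * Real.log 2)) ^ 2 / 4
          ≤ Real.exp ((a:ℝ) * (ε * Real.log 2)) := by
        set x : ℝ := (a:ℝ) * (ε * Real.log 2) with hx'
        have hx : 0 ≤ x := by positivity
        have h1 : 1 + x/2 ≤ Real.exp (x/2) := by
          have := Real.add_one_le_exp (x/2); linarith
        have h2 : (1 + x/2)^2 ≤ (Real.exp (x/2))^2 := by
          apply pow_le_pow_left₀ (by linarith) h1
        have h3 : (Real.exp (x/2))^2 = Real.exp (2 * (x/2)) := by
          rw [← Real.exp_nat_mul]; norm_num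
        have h4 : 2 * (x/2) = x := by ring
        rw [h4] at h3
        nlinarith
      set t : ℝ := ε * Real.log 2 with ht'
      have ht : 0 < t := by positivity
      have hKt : 16 / t ^ 2 ≤ K := le_max_right _ _
      have hE : Real.exp ((a:ℝ) * t) ≤ ((p:ℝ) ^ a) ^ ε := by
        rw [hpa, ← hexp]; exact h2a
      have hE0 : (0:ℝ) < Real.exp ((a:ℝ)*t) := Real.exp_pos _
      have step : (16 / t ^ 2) * (((a:ℝ) * t) ^ 2 / 4) ≤ K * ((p:ℝ) ^ a) ^ ε := by
        have : (16 / t ^ 2) * (((a:ℝ) * t) ^ 2 / 4) ≤ K * Real.exp ((a:ℝ)*t) := by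
          apply mul_le_mul hKt hquad (by positivity) hK0
        apply this.trans
        exact mul_le_mul_of_nonneg_left hE hK0
      have hsimp : (16 / t ^ 2) * (((a:ℝ) * t) ^ 2 / 4) = 4 * (a:ℝ)^2 := by
        field_simp; ring
      rw [hsimp] at step
      push_cast
      nlinarith
    · rw [if_neg hcase, one_mul, hpa]
      -- large prime: p^ε ≥ 2
      have hpP : (P:ℝ) ≤ (p:ℝ) := by exact_mod_cast Nat.le_of_not_lt hcase
      have h2p : (2:ℝ) ^ (1/ε) ≤ (p:ℝ) := (Nat.ceil_le.mp (le_refl P)).trans hpP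
      have h2 : (2:ℝ) ≤ (p:ℝ) ^ ε := by
        have := Real.rpow_le_rpow (by positivity) h2p hε.le
        rwa [← Real.rpow_mul (by norm_num), one_div, inv_mul_cancel₀ hε.ne',
          Real.rpow_one] at this
      calc ((a + 1 : ℕ) : ℝ) ≤ (2:ℝ) ^ a := by
            exact_mod_cast Nat.succ_le_of_lt (Nat.lt_two_pow_self (n := a))
        _ ≤ ((p:ℝ) ^ ε) ^ a := pow_le_pow_left₀ (by norm_num) h2 a
  have hd : (m.divisors.card : ℝ)
      = ∏ p ∈ m.primeFactors, ((m.factorization p + 1 : ℕ) : ℝ) := by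
    rw [Nat.card_divisors hm]; push_cast; rfl
  have hprod : ∏ p ∈ m.primeFactors, (p:ℝ) ^ (m.factorization p : ℕ) = (m:ℝ) := by
    have hn : ∏ p ∈ m.primeFactors, p ^ m.factorization p = m := by
      rw [← Nat.support_factorization]
      exact Nat.factorization_prod_pow_eq_self hm
    have h2 := congrArg (Nat.cast : ℕ → ℝ) hn
    push_cast at h2
    exact h2
  have hc : ∏ p ∈ m.primeFactors, (if p < P then K else 1) ≤ K ^ P := by
    rw [Finset.prod_ite, Finset.prod_const, Finset.prod_const, one_pow, mul_one]
    apply pow_le_pow_right₀ hK1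
    apply le_trans (Finset.card_le_card (fun x hx => Finset.mem_range.mpr
      (Finset.mem_filter.mp hx).2)) (by simp)
  calc (m.divisors.card : ℝ)
      = ∏ p ∈ m.primeFactors, ((m.factorization p + 1 : ℕ) : ℝ) := hd
    _ ≤ ∏ p ∈ m.primeFactors,
        ((if p < P then K else 1) * ((p:ℝ) ^ (m.factorization p:ℕ)) ^ ε) :=
        Finset.prod_le_prod (fun i _ => by positivity) key
    _ = (∏ p ∈ m.primeFactors, (if p < P then K else 1))
        * ∏ p ∈ m.primeFactors, ((p:ℝ) ^ (m.factorization p:ℕ)) ^ ε :=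
        Finset.prod_mul_distrib
    _ = (∏ p ∈ m.primeFactors, (if p < P then K else 1)) * (m:ℝ) ^ ε := by
        rw [Real.finset_prod_rpow _ _ (fun i _ => by positivity), hprod]
    _ ≤ K ^ P * (m:ℝ) ^ ε :=
        mul_le_mul_of_nonneg_right hc (by positivity)

noncomputable def sdiv (m : ℤ) : Finset ℤ :=
  (Finset.Icc (-(m.natAbs : ℤ)) (m.natAbs : ℤ)).filter (· ∣ m)

lemma mem_sdiv {m d : ℤ} (hm : m ≠ 0) (hd : d ∣ m) : d ∈ sdiv m := by
  classical
  refine Finset.mem_filter.mpr ⟨?_, hd⟩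
  have h1 : d.natAbs ≤ m.natAbs :=
    Nat.le_of_dvd (Int.natAbs_pos.mpr hm) (Int.natAbs_dvd_natAbs.mpr hd)
  have h2 : |d| ≤ (m.natAbs : ℤ) := by
    rw [Int.abs_eq_natAbs]; exact_mod_cast h1
  rw [Finset.mem_Icc]
  rcases abs_le.mp h2 with ⟨ha, hb⟩
  exact ⟨ha, hb⟩

lemma sdiv_card {m : ℤ} (hm : m ≠ 0) :
    (sdiv m).card ≤ 2 * m.natAbs.divisors.card := by
  classical
  have key : (sdiv m).card ≤ (m.natAbs.divisors ×ˢ (Finset.univ : Finset Bool)).card := by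
    apply Finset.card_le_card_of_injOn (fun d => (d.natAbs, decide (0 ≤ d)))
    · intro d hd
      obtain ⟨_, hd2⟩ := Finset.mem_filter.mp hd
      exact Finset.mem_product.mpr ⟨Nat.mem_divisors.mpr
        ⟨Int.natAbs_dvd_natAbs.mpr hd2, Int.natAbs_ne_zero.mpr hm⟩, Finset.mem_univ _⟩
    · intro a ha b hb hab
      obtain ⟨_, ha2⟩ := Finset.mem_filter.mp ha
      obtain ⟨_, hb2⟩ := Finset.mem_filter.mp hb
      have ha0 : a ≠ 0 := by rintro rfl; exact hm (zero_dvd_iff.mp ha2)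
      have hb0 : b ≠ 0 := by rintro rfl; exact hm (zero_dvd_iff.mp hb2)
      have h1 : a.natAbs = b.natAbs := congrArg Prod.fst hab
      have h2 : (0 ≤ a) = (0 ≤ b) := by
        have := congrArg Prod.snd hab
        simpa [decide_eq_decide] using this
      rcases Int.natAbs_eq_natAbs_iff.mp h1 with h | h
      · exact h
      · exfalso
        rcases le_or_gt 0 a with h0 | h0
        · have hb' : 0 ≤ b := by rw [← h2]; exact h0
          omega
        · have hb' : ¬ (0 ≤ b) := by rw [← h2]; exact not_le.mpr h0
          omega
  calc (sdiv m).card ≤ _ := key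
    _ = 2 * m.natAbs.divisors.card := by
        rw [Finset.card_product]; simp [mul_comm]

private lemma aux2 {b c e f : ℤ} (hs : b + c = e + f) (hp : b * c = e * f) :
    (b = e ∧ c = f) ∨ (b = f ∧ c = e) := by
  have h : (b - e) * (b - f) = 0 := by linear_combination b * hs - hp
  rcases mul_eq_zero.mp h with h' | h'
  · left; constructor <;> [linarith; linarith]
  · right; constructor <;> [linarith; linarith]


lemma exists_perm_of_sym (x y : Fin 3 → ℤ)
    (h1 : x 0 + x 1 + x 2 = y 0 + y 1 + y 2)
    (h2 : x 0 * x 1 + x 1 * x 2 + x 2 * x 0 = y 0 * y 1 + y 1 * y 2 + y 2 * y 0)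
    (h3 : x 0 * x 1 * x 2 = y 0 * y 1 * y 2) :
    ∃ σ : Equiv.Perm (Fin 3), y = x ∘ σ := by
  have key : (x 0 - y 0) * ((x 0 - y 1) * (x 0 - y 2)) = 0 := by
    linear_combination (x 0)^2 * h1 - x 0 * h2 + h3
  rcases mul_eq_zero.mp key with h0 | key2
  · -- x 0 = y 0
    have e0 : y 0 = x 0 := by linarith
    have hs : x 1 + x 2 = y 1 + y 2 := by linarith
    have hp : x 1 * x 2 = y 1 * y 2 := by linear_combination h2 - x 0 * hs - (y 1 + y 2) * h0
    rcases aux2 hs hp with ⟨e1, e2⟩ | ⟨e1, e2⟩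
    · exact ⟨1, by funext i; fin_cases i <;> simp [e0, ← e1, ← e2]⟩
    · refine ⟨Equiv.swap 1 2, ?_⟩
      funext i; fin_cases i <;> simp [Equiv.swap_apply_of_ne_of_ne, e0, ← e1, ← e2]
  rcases mul_eq_zero.mp key2 with h0 | h0
  · -- x 0 = y 1
    have e0 : y 1 = x 0 := by linarith
    have hs : x 1 + x 2 = y 0 + y 2 := by linarith
    have hp : x 1 * x 2 = y 0 * y 2 := by linear_combination h2 - x 0 * hs - (y 0 + y 2) * h0
    rcases aux2 hs hp with ⟨e1, e2⟩ | ⟨e1, e2⟩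
    · refine ⟨Equiv.swap 0 1, ?_⟩
      funext i; fin_cases i <;> simp [Equiv.swap_apply_of_ne_of_ne, e0, ← e1, ← e2]
    · refine ⟨⟨![2,0,1], ![1,2,0], by decide, by decide⟩, ?_⟩
      funext i; fin_cases i <;> simp [e0, ← e1, ← e2]
  · -- x 0 = y 2
    have e0 : y 2 = x 0 := by linarith
    have hs : x 1 + x 2 = y 0 + y 1 := by linarith
    have hp : x 1 * x 2 = y 0 * y 1 := by linear_combination h2 - x 0 * hs - (y 0 + y 1) * h0
    rcases aux2 hs hp with ⟨e1, e2⟩ | ⟨e1, e2⟩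
    · refine ⟨⟨![1,2,0], ![2,0,1], by decide, by decide⟩, ?_⟩
      funext i; fin_cases i <;> simp [e0, ← e1, ← e2]
    · refine ⟨Equiv.swap 0 2, ?_⟩
      funext i; fin_cases i <;> simp [Equiv.swap_apply_of_ne_of_ne, e0, ← e1, ← e2]

lemma sym_inv (x : Fin 3 → ℤ) (σ : Equiv.Perm (Fin 3)) :
    x (σ 0) + x (σ 1) + x (σ 2) = x 0 + x 1 + x 2 ∧
    x (σ 0) * x (σ 1) + x (σ 1) * x (σ 2) + x (σ 2) * x (σ 0)
      = x 0 * x 1 + x 1 * x 2 + x 2 * x 0 ∧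
    x (σ 0) * x (σ 1) * x (σ 2) = x 0 * x 1 * x 2 := by
  have hsum : x (σ 0) + x (σ 1) + x (σ 2) = x 0 + x 1 + x 2 := by
    rw [← Fin.sum_univ_three (fun i => x (σ i)), ← Fin.sum_univ_three x]
    exact Equiv.sum_comp σ x
  have hsq : x (σ 0) ^ 2 + x (σ 1) ^ 2 + x (σ 2) ^ 2 = x 0 ^ 2 + x 1 ^ 2 + x 2 ^ 2 := by
    rw [← Fin.sum_univ_three (fun i => x (σ i) ^ 2), ← Fin.sum_univ_three (fun i => x i ^ 2)]
    exact Equiv.sum_comp σ (fun i => x i ^ 2)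
  have hprod : x (σ 0) * x (σ 1) * x (σ 2) = x 0 * x 1 * x 2 := by
    rw [← Fin.prod_univ_three (fun i => x (σ i)), ← Fin.prod_univ_three x]
    exact Equiv.prod_comp σ x
  refine ⟨hsum, ?_, hprod⟩
  have h2 : 2 * (x (σ 0) * x (σ 1) + x (σ 1) * x (σ 2) + x (σ 2) * x (σ 0))
      = 2 * (x 0 * x 1 + x 1 * x 2 + x 2 * x 0) := by
    linear_combination (x (σ 0) + x (σ 1) + x (σ 2) + x 0 + x 1 + x 2) * hsum - hsq
  exact mul_left_cancel₀ (by norm_num) h2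

set_option maxHeartbeats 2000000 in
/-- The system `x₁x₂x₃ + 2(x₁+x₂+x₃) = y₁y₂y₃ + 2(y₁+y₂+y₃)` and
`x₁x₂ + x₂x₃ + x₃x₁ = y₁y₂ + y₂y₃ + y₃y₁` (encoding
`(x₁+√2)(x₂+√2)(x₃+√2) = (y₁+√2)(y₂+√2)(y₃+√2)`) has `6⌊X⌋³ + O(X^(2+ε))` solutions in
the box `[1,X]⁶`. -/
theorem sqrt_two_system_count (ε : ℝ) (hε : 0 < ε) :
    ∃ C : ℝ, 0 < C ∧ ∀ X : ℝ, 2 ≤ X →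
      |({p : (Fin 3 → ℤ) × (Fin 3 → ℤ) |
          (∀ i, 1 ≤ p.1 i ∧ (p.1 i : ℝ) ≤ X) ∧ (∀ i, 1 ≤ p.2 i ∧ (p.2 i : ℝ) ≤ X) ∧
          p.1 0 * p.1 1 * p.1 2 + 2 * (p.1 0 + p.1 1 + p.1 2)
            = p.2 0 * p.2 1 * p.2 2 + 2 * (p.2 0 + p.2 1 + p.2 2) ∧
          p.1 0 * p.1 1 + p.1 1 * p.1 2 + p.1 2 * p.1 0
            = p.2 0 * p.2 1 + p.2 1 * p.2 2 + p.2 2 * p.2 0}.ncard : ℝ)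
          - 6 * (⌊X⌋ : ℝ) ^ 3|
        ≤ C * X ^ ((2 : ℝ) + ε) := by
  classical
  obtain ⟨C₀, hC₀1, hC₀⟩ := divisor_bound (ε/6) (by positivity)
  have hC₀0 : (0:ℝ) < C₀ := lt_of_lt_of_le one_pos hC₀1
  refine ⟨18 + 56 * C₀^2 * (3:ℝ)^(ε/3), by positivity, ?_⟩
  intro X hX
  set S : Set ((Fin 3 → ℤ) × (Fin 3 → ℤ)) := {p : (Fin 3 → ℤ) × (Fin 3 → ℤ) |
          (∀ i, 1 ≤ p.1 i ∧ (p.1 i : ℝ) ≤ X) ∧ (∀ i, 1 ≤ p.2 i ∧ (p.2 i : ℝ) ≤ X) ∧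
          p.1 0 * p.1 1 * p.1 2 + 2 * (p.1 0 + p.1 1 + p.1 2)
            = p.2 0 * p.2 1 * p.2 2 + 2 * (p.2 0 + p.2 1 + p.2 2) ∧
          p.1 0 * p.1 1 + p.1 1 * p.1 2 + p.1 2 * p.1 0
            = p.2 0 * p.2 1 + p.2 1 * p.2 2 + p.2 2 * p.2 0} with hS
  have hX0 : (0:ℝ) < X := by linarith
  have hX1 : (1:ℝ) ≤ X := by linarith
  set N : ℤ := ⌊X⌋ with hN
  have hN2 : (2:ℤ) ≤ N := by
    rw [hN]; exact Int.le_floor.mpr (by exact_mod_cast hX)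
  have hNX : (N:ℝ) ≤ X := Int.floor_le X
  have hN0 : (0:ℤ) ≤ N := by linarith
  set n : ℕ := N.toNat with hn
  have hnN : (n:ℤ) = N := Int.toNat_of_nonneg hN0
  have hn2 : 2 ≤ n := by omega
  have hnX : (n:ℝ) ≤ X := by
    have : ((n:ℤ):ℝ) ≤ X := by rw [hnN]; exact hNX
    exact_mod_cast this
  have memS : ∀ p : (Fin 3 → ℤ) × (Fin 3 → ℤ), p ∈ S ↔
      ((∀ i, p.1 i ∈ Finset.Icc 1 N) ∧ (∀ i, p.2 i ∈ Finset.Icc 1 N) ∧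
        (p.1 0 * p.1 1 * p.1 2 + 2 * (p.1 0 + p.1 1 + p.1 2)
            = p.2 0 * p.2 1 * p.2 2 + 2 * (p.2 0 + p.2 1 + p.2 2)) ∧
        (p.1 0 * p.1 1 + p.1 1 * p.1 2 + p.1 2 * p.1 0
            = p.2 0 * p.2 1 + p.2 1 * p.2 2 + p.2 2 * p.2 0)) := by
    intro p
    simp only [hS, Set.mem_setOf_eq, Finset.mem_Icc, hN, Int.le_floor]
  set boxF : Finset (Fin 3 → ℤ) := Fintype.piFinset (fun _ => Finset.Icc 1 N) with hbox
  have hboxcard : boxF.card = n ^ 3 := by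
    rw [hbox, Fintype.card_piFinset]
    have hIcc : (Finset.Icc (1:ℤ) N).card = n := by
      rw [Int.card_Icc]; omega
    simp [hIcc]
  have hSsub : S ⊆ ↑(boxF ×ˢ boxF) := by
    intro p hp
    rw [memS] at hp
    simp only [Finset.coe_product, Set.mem_prod, hbox, Finset.mem_coe,
      Fintype.mem_piFinset]
    exact ⟨hp.1, hp.2.1⟩
  have hSfin : S.Finite := Set.Finite.subset (boxF ×ˢ boxF).finite_toSet hSsub
  set Sp : Set ((Fin 3 → ℤ) × (Fin 3 → ℤ)) :=
    {p ∈ S | p.1 0 + p.1 1 + p.1 2 = p.2 0 + p.2 1 + p.2 2} with hSp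
  set Sn : Set ((Fin 3 → ℤ) × (Fin 3 → ℤ)) :=
    {p ∈ S | p.1 0 + p.1 1 + p.1 2 ≠ p.2 0 + p.2 1 + p.2 2} with hSn
  have hsplit : S = Sp ∪ Sn := by
    ext p; simp only [hSp, hSn, Set.mem_union, Set.mem_setOf_eq]; tauto
  have hSpfin : Sp.Finite := hSfin.subset (fun p hp => hp.1)
  have hSnfin : Sn.Finite := hSfin.subset (fun p hp => hp.1)
  -- lower bound
  have hIcc : (Finset.Icc (1:ℤ) N).card = n := by
    rw [Int.card_Icc]; omega
  have hlow : 6 * ((n - 2) * ((n - 1) * n)) ≤ S.ncard := by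
    have hfinS : Finite ↥S := hSfin.to_subtype
    have hf : ∃ f : (Fin 3 ↪ ↥(Finset.Icc (1:ℤ) N)) × Equiv.Perm (Fin 3) → ↥S,
        Function.Injective f := by
      refine ⟨fun q => ⟨((fun i => (q.1 i : ℤ)), (fun i => (q.1 (q.2 i) : ℤ))), ?_⟩, ?_⟩
      · rw [memS]
        obtain ⟨h1, h2, h3⟩ := sym_inv (fun i => (q.1 i : ℤ)) q.2
        refine ⟨fun i => (q.1 i).2, fun i => (q.1 (q.2 i)).2, by linarith, by linarith⟩
      · intro q q' h
        have h1 : ∀ i, (q.1 i : ℤ) = (q'.1 i : ℤ) := fun i =>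
          congrFun (congrArg Prod.fst (Subtype.ext_iff.mp h)) i
        have he : q.1 = q'.1 := by
          ext i
          exact_mod_cast h1 i
        have h2 : ∀ i, (q.1 (q.2 i) : ℤ) = (q'.1 (q'.2 i) : ℤ) := fun i =>
          congrFun (congrArg Prod.snd (Subtype.ext_iff.mp h)) i
        have hσ : q.2 = q'.2 := by
          ext i
          have : (q.1 (q.2 i) : ℤ) = (q.1 (q'.2 i) : ℤ) := by
            rw [h2 i, he]
          exact congrArg Fin.val (q.1.injective (Subtype.coe_injective this))
        exact Prod.ext he hσ
    obtain ⟨f, hf⟩ := hf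
    have hcard := Nat.card_le_card_of_injective f hf
    rw [Nat.card_coe_set_eq] at hcard
    refine le_trans (le_of_eq ?_) hcard
    rw [Nat.card_eq_fintype_card, Fintype.card_prod, Fintype.card_embedding_eq,
      Fintype.card_coe, hIcc, Fintype.card_perm, Fintype.card_fin]
    show 6 * ((n - 2) * ((n - 1) * n)) = n.descFactorial 3 * Nat.factorial 3
    rw [Nat.descFactorial_succ, Nat.descFactorial_succ, Nat.descFactorial_succ,
      Nat.descFactorial_zero]
    simp [Nat.factorial]
    ring
  -- permutation part upper bound
  have hperm : Sp.ncard ≤ 6 * n ^ 3 := by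
    set T : Finset ((Fin 3 → ℤ) × (Fin 3 → ℤ)) :=
      (boxF ×ˢ (Finset.univ : Finset (Equiv.Perm (Fin 3)))).image
        (fun q => (q.1, q.1 ∘ q.2)) with hT
    have hsub : Sp ⊆ ↑T := by
      intro p hp
      obtain ⟨hpS, hsum⟩ := hp
      rw [memS] at hpS
      obtain ⟨hb1, hb2, heq1, heq2⟩ := hpS
      have heq3 : p.1 0 * p.1 1 * p.1 2 = p.2 0 * p.2 1 * p.2 2 := by linarith
      obtain ⟨σ, hσ⟩ := exists_perm_of_sym p.1 p.2 hsum heq2 heq3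
      rw [Finset.mem_coe, hT, Finset.mem_image]
      refine ⟨(p.1, σ), Finset.mem_product.mpr
        ⟨Fintype.mem_piFinset.mpr hb1, Finset.mem_univ _⟩, ?_⟩
      have : (p.1, p.1 ∘ ⇑σ) = (p.1, p.2) := by rw [← hσ]
      simpa using this
    calc Sp.ncard ≤ T.card := by
          rw [← Set.ncard_coe_finset T]
          exact Set.ncard_le_ncard hsub T.finite_toSet
      _ ≤ (boxF ×ˢ (Finset.univ : Finset (Equiv.Perm (Fin 3)))).card :=
          Finset.card_image_le
      _ = 6 * n ^ 3 := by
          rw [Finset.card_product, hboxcard, Finset.card_univ, Fintype.card_perm,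
            Fintype.card_fin]
          norm_num [Nat.factorial]
          ring
  -- nontrivial part upper bound
  have hnon : (Sn.ncard : ℝ) ≤ 56 * C₀^2 * (3:ℝ)^(ε/3) * X ^ ((2:ℝ) + ε) := by
    set Φ : (Fin 3 → ℤ) × (Fin 3 → ℤ) → ℤ × ℤ × ℤ × ℤ × Bool := fun p =>
      (p.2 0, (p.1 0 + p.1 1 + p.1 2) - (p.2 0 + p.2 1 + p.2 2),
       p.1 0 - p.2 0, p.1 1 - p.2 0, decide (p.2 1 ≤ p.2 2)) with hΦ
    set P : Finset (ℤ × ℤ) :=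
      (Finset.Icc 1 N) ×ˢ ((Finset.Icc (-(3*N)) (3*N)).erase 0) with hP
    set T : Finset (ℤ × ℤ × ℤ × ℤ × Bool) := P.biUnion (fun q =>
      {q.1} ×ˢ {q.2} ×ˢ sdiv (q.2 * (q.1^2 - 2)) ×ˢ sdiv (q.2 * (q.1^2 - 2)) ×ˢ
        (Finset.univ : Finset Bool)) with hT
    have hysq : ∀ z : ℤ, 1 ≤ z → z ^ 2 - 2 ≠ 0 := by
      intro z hz
      rcases eq_or_lt_of_le hz with h | h
      · rw [← h]; norm_num
      · have h2 : 2 ≤ z := h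
        intro hc; nlinarith
    -- key algebraic identity for members of Sn
    have hkey : ∀ p ∈ Sn,
        (p.1 0 - p.2 0) * ((p.1 1 - p.2 0) * (p.1 2 - p.2 0))
          = ((p.1 0 + p.1 1 + p.1 2) - (p.2 0 + p.2 1 + p.2 2)) * ((p.2 0)^2 - 2) := by
      intro p hp
      obtain ⟨hpS, hne⟩ := hp
      rw [memS] at hpS
      obtain ⟨hb1, hb2, he1, he2⟩ := hpS
      linear_combination he1 - (p.2 0) * he2
    have himg : Φ '' Sn ⊆ ↑T := by
      rintro _ ⟨p, hp, rfl⟩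
      obtain ⟨hpS, hne⟩ := hp
      rw [memS] at hpS
      obtain ⟨hb1, hb2, he1, he2⟩ := hpS
      have hx0 := Finset.mem_Icc.mp (hb1 0)
      have hx1 := Finset.mem_Icc.mp (hb1 1)
      have hx2 := Finset.mem_Icc.mp (hb1 2)
      have hy0 := Finset.mem_Icc.mp (hb2 0)
      have hy1 := Finset.mem_Icc.mp (hb2 1)
      have hy2 := Finset.mem_Icc.mp (hb2 2)
      have ha : (p.1 0 + p.1 1 + p.1 2) - (p.2 0 + p.2 1 + p.2 2) ≠ 0 :=
        sub_ne_zero.mpr hne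
      have hM : ((p.1 0 + p.1 1 + p.1 2) - (p.2 0 + p.2 1 + p.2 2)) * ((p.2 0)^2 - 2) ≠ 0 :=
        mul_ne_zero ha (hysq _ hy0.1)
      have hk := hkey p ⟨by rw [memS]; exact ⟨hb1, hb2, he1, he2⟩, hne⟩
      rw [Finset.mem_coe, hT, Finset.mem_biUnion]
      refine ⟨(p.2 0, (p.1 0 + p.1 1 + p.1 2) - (p.2 0 + p.2 1 + p.2 2)), ?_, ?_⟩
      · rw [hP, Finset.mem_product]
        constructor
        · exact Finset.mem_Icc.mpr hy0
        · rw [Finset.mem_erase]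
          refine ⟨ha, Finset.mem_Icc.mpr ⟨?_, ?_⟩⟩
          · show -(3*N) ≤ p.1 0 + p.1 1 + p.1 2 - (p.2 0 + p.2 1 + p.2 2)
            linarith [hx0.1, hx1.1, hx2.1, hy0.2, hy1.2, hy2.2, hN2]
          · show p.1 0 + p.1 1 + p.1 2 - (p.2 0 + p.2 1 + p.2 2) ≤ 3*N
            linarith [hx0.2, hx1.2, hx2.2, hy0.1, hy1.1, hy2.1, hN2]
      · simp only [Finset.mem_product]
        exact ⟨Finset.mem_singleton_self _, Finset.mem_singleton_self _,
          mem_sdiv hM ⟨(p.1 1 - p.2 0) * (p.1 2 - p.2 0), hk.symm⟩,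
          mem_sdiv hM ⟨(p.1 0 - p.2 0) * (p.1 2 - p.2 0), by linear_combination - hk⟩,
          Finset.mem_univ _⟩
    have hinj : Set.InjOn Φ Sn := by
      intro p hp p' hp' heq
      have hk := hkey p hp
      have hk' := hkey p' hp'
      obtain ⟨hpS, hne⟩ := hp
      obtain ⟨hpS', hne'⟩ := hp'
      rw [memS] at hpS hpS'
      obtain ⟨hb1, hb2, he1, he2⟩ := hpS
      obtain ⟨hb1', hb2', he1', he2'⟩ := hpS'
      have c1 : p.2 0 = p'.2 0 := congrArg (fun t => t.1) heq
      have c2 : (p.1 0 + p.1 1 + p.1 2) - (p.2 0 + p.2 1 + p.2 2)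
          = (p'.1 0 + p'.1 1 + p'.1 2) - (p'.2 0 + p'.2 1 + p'.2 2) :=
        congrArg (fun t => t.2.1) heq
      have c3 : p.1 0 - p.2 0 = p'.1 0 - p'.2 0 := congrArg (fun t => t.2.2.1) heq
      have c4 : p.1 1 - p.2 0 = p'.1 1 - p'.2 0 := congrArg (fun t => t.2.2.2.1) heq
      have c5 : decide (p.2 1 ≤ p.2 2) = decide (p'.2 1 ≤ p'.2 2) :=
        congrArg (fun t => t.2.2.2.2) heq
      have hiff : (p.2 1 ≤ p.2 2) ↔ (p'.2 1 ≤ p'.2 2) := by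
        rwa [decide_eq_decide] at c5
      have hy0 := Finset.mem_Icc.mp (hb2 0)
      have ha : (p.1 0 + p.1 1 + p.1 2) - (p.2 0 + p.2 1 + p.2 2) ≠ 0 :=
        sub_ne_zero.mpr hne
      have hM : ((p.1 0 + p.1 1 + p.1 2) - (p.2 0 + p.2 1 + p.2 2)) * ((p.2 0)^2 - 2) ≠ 0 :=
        mul_ne_zero ha (hysq _ hy0.1)
      have e10 : p.1 0 = p'.1 0 := by linarith [c3, c1]
      have e11 : p.1 1 = p'.1 1 := by linarith [c4, c1]
      have hd1 : p.1 0 - p.2 0 ≠ 0 := by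
        intro h; apply hM; rw [← hk, h, zero_mul]
      have hd2 : p.1 1 - p.2 0 ≠ 0 := by
        intro h; apply hM; rw [← hk, h, zero_mul, mul_zero]
      have e12 : p.1 2 = p'.1 2 := by
        have hKK : (p.1 0 - p.2 0) * ((p.1 1 - p.2 0) * (p.1 2 - p.2 0))
            = (p.1 0 - p.2 0) * ((p.1 1 - p.2 0) * (p'.1 2 - p.2 0)) := by
          rw [hk, c1, c2, e10, e11] at *
          exact hk'.symm
        have h1 := mul_left_cancel₀ hd1 hKK
        have h2 := mul_left_cancel₀ hd2 h1
        linarith [h2]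
      have hx : p.1 = p'.1 := by
        funext i; fin_cases i <;> assumption
      have hs : p.2 1 + p.2 2 = p'.2 1 + p'.2 2 := by
        linarith [c2, c1, e10, e11, e12]
      have hq0 : p.2 0 * p.2 1 + p.2 1 * p.2 2 + p.2 2 * p.2 0
          = p.2 0 * p'.2 1 + p'.2 1 * p'.2 2 + p'.2 2 * p.2 0 := by
        rw [← e10, ← e11, ← e12] at he2'
        rw [← c1] at he2'
        exact he2.symm.trans he2'
      have hq : p.2 1 * p.2 2 = p'.2 1 * p'.2 2 := by
        linear_combination hq0 - p.2 0 * hs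
      have hroot : (p.2 1 - p'.2 1) * (p.2 1 - p'.2 2) = 0 := by
        linear_combination p.2 1 * hs - hq
      have hy : p.2 = p'.2 := by
        rcases mul_eq_zero.mp hroot with h | h
        · have hb1 : p.2 1 = p'.2 1 := by linarith
          have hb2 : p.2 2 = p'.2 2 := by linarith [hs]
          funext i; fin_cases i
          · exact c1
          · exact hb1
          · exact hb2
        · -- p.2 1 = p'.2 2
          have hb1 : p.2 1 = p'.2 2 := by linarith
          have hb2 : p.2 2 = p'.2 1 := by linarith [hs]
          have heq12 : p.2 1 = p.2 2 := by
            rcases le_total (p.2 1) (p.2 2) with h' | h'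
            · have := hiff.mp h'
              omega
            · have : p'.2 1 ≤ p'.2 2 → p.2 1 ≤ p.2 2 := hiff.mpr
              omega
          funext i; fin_cases i
          · exact c1
          · exact heq12.trans hb2
          · exact heq12.symm.trans hb1
      exact Prod.ext hx hy
    -- cardinality estimates
    have hcount : (Sn.ncard : ℝ) ≤ (T.card : ℝ) := by
      have h1 : Sn.ncard = (Φ '' Sn).ncard := (Set.ncard_image_of_injOn hinj).symm
      have h2 : (Φ '' Sn).ncard ≤ T.card := by
        rw [← Set.ncard_coe_finset T]
        exact Set.ncard_le_ncard himg T.finite_toSet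
      exact_mod_cast h1 ▸ Nat.cast_le.mpr h2
    set D : ℝ := 2 * (C₀ * (3 * X^3) ^ (ε/6)) with hD
    have hD0 : 0 ≤ D := by positivity
    have hTbound : (T.card : ℝ) ≤ (P.card : ℝ) * (2 * D^2) := by
      have h1 : T.card ≤ ∑ q ∈ P, ({q.1} ×ˢ {q.2} ×ˢ sdiv (q.2 * (q.1^2 - 2)) ×ˢ
          sdiv (q.2 * (q.1^2 - 2)) ×ˢ (Finset.univ : Finset Bool)).card :=
        Finset.card_biUnion_le
      have h2 : ∀ q ∈ P, ((({q.1} ×ˢ {q.2} ×ˢ sdiv (q.2 * (q.1^2 - 2)) ×ˢ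
          sdiv (q.2 * (q.1^2 - 2)) ×ˢ (Finset.univ : Finset Bool)).card : ℝ)) ≤ 2 * D^2 := by
        intro q hq
        rw [hP, Finset.mem_product, Finset.mem_erase] at hq
        obtain ⟨hqy, hqa0, hqa⟩ := hq
        have hqy' := Finset.mem_Icc.mp hqy
        have hqa' := Finset.mem_Icc.mp hqa
        have hM0 : q.2 * (q.1^2 - 2) ≠ 0 := mul_ne_zero hqa0 (hysq _ hqy'.1)
        have hMabs : (((q.2 * (q.1^2 - 2)).natAbs : ℕ) : ℝ) ≤ 3 * X^3 := by
          have habs : |q.2 * (q.1^2 - 2)| ≤ 3 * N^3 := by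
            rw [abs_mul]
            have ha1 : |q.2| ≤ 3*N := abs_le.mpr ⟨hqa'.1, hqa'.2⟩
            have ha2 : |q.1^2 - 2| ≤ N^2 := by
              apply abs_le.mpr
              constructor
              · nlinarith [hqy'.1, hqy'.2, hN2]
              · nlinarith [hqy'.1, hqy'.2, hN2]
            calc |q.2| * |q.1^2 - 2| ≤ (3*N) * N^2 :=
                  mul_le_mul ha1 ha2 (abs_nonneg _) (by linarith)
              _ = 3 * N^3 := by ring
          have h1' : ((q.2 * (q.1^2 - 2)).natAbs : ℤ) ≤ 3 * N ^ 3 := by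
            rwa [Int.abs_eq_natAbs] at habs
          have h1 : (((q.2 * (q.1^2 - 2)).natAbs : ℤ) : ℝ) ≤ ((3 * N^3 : ℤ) : ℝ) := by
            exact_mod_cast h1'
          have h2 : ((3 * N^3 : ℤ) : ℝ) ≤ 3 * X^3 := by
            push_cast
            have hN0' : (0:ℝ) ≤ (N:ℝ) := by exact_mod_cast hN0
            have h8 : (N:ℝ)^3 ≤ X^3 := by
              apply pow_le_pow_left₀ hN0' hNX
            linarith
          calc (((q.2 * (q.1^2 - 2)).natAbs : ℕ) : ℝ)
              = (((q.2 * (q.1^2 - 2)).natAbs : ℤ) : ℝ) := (Int.cast_natCast _).symm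
            _ ≤ 3 * X^3 := le_trans h1 h2
        have hdiv : ((sdiv (q.2 * (q.1^2 - 2))).card : ℝ) ≤ D := by
          have h4 := sdiv_card hM0
          have h5 := hC₀ (q.2 * (q.1^2 - 2)).natAbs (Int.natAbs_ne_zero.mpr hM0)
          have h6 : ((q.2 * (q.1^2 - 2)).natAbs : ℝ) ^ (ε/6) ≤ (3 * X^3) ^ (ε/6) :=
            Real.rpow_le_rpow (by positivity) hMabs (by positivity)
          have h7 : ((sdiv (q.2 * (q.1^2 - 2))).card : ℝ)
              ≤ 2 * (((q.2 * (q.1^2 - 2)).natAbs.divisors.card : ℕ) : ℝ) := by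
            exact_mod_cast h4
          calc ((sdiv (q.2 * (q.1^2 - 2))).card : ℝ) ≤ _ := h7
            _ ≤ 2 * (C₀ * ((q.2 * (q.1^2 - 2)).natAbs : ℝ) ^ (ε/6)) := by linarith
            _ ≤ D := by
                rw [hD]
                have := mul_le_mul_of_nonneg_left h6 (le_of_lt hC₀0)
                linarith
        have hcards : (({q.1} ×ˢ {q.2} ×ˢ sdiv (q.2 * (q.1^2 - 2)) ×ˢ
            sdiv (q.2 * (q.1^2 - 2)) ×ˢ (Finset.univ : Finset Bool)).card)
            = (sdiv (q.2 * (q.1^2 - 2))).card * ((sdiv (q.2 * (q.1^2 - 2))).card * 2) := by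
          simp [Finset.card_product]
        rw [hcards]
        have hc0 : (0:ℝ) ≤ ((sdiv (q.2 * (q.1^2 - 2))).card : ℝ) := Nat.cast_nonneg _
        push_cast
        nlinarith [hdiv, hD0, hc0]
      calc (T.card : ℝ) ≤ ∑ q ∈ P, ((({q.1} ×ˢ {q.2} ×ˢ sdiv (q.2 * (q.1^2 - 2)) ×ˢ
            sdiv (q.2 * (q.1^2 - 2)) ×ˢ (Finset.univ : Finset Bool)).card : ℝ)) := by
            exact_mod_cast h1
        _ ≤ ∑ q ∈ P, (2 * D^2) := Finset.sum_le_sum h2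
        _ = (P.card : ℝ) * (2 * D^2) := by rw [Finset.sum_const, nsmul_eq_mul]
    have hPcard : (P.card : ℝ) ≤ 7 * X^2 := by
      have h1 : P.card ≤ n * (6*n+1) := by
        rw [hP, Finset.card_product, hIcc]
        apply Nat.mul_le_mul_left
        calc ((Finset.Icc (-(3*N)) (3*N)).erase 0).card
            ≤ (Finset.Icc (-(3*N)) (3*N)).card := Finset.card_erase_le
          _ = (3*N + 1 - -(3*N)).toNat := Int.card_Icc _ _
          _ ≤ 6*n+1 := by omega
      have h2 : ((n * (6*n+1) : ℕ) : ℝ) ≤ 7 * X^2 := by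
        have hn0 : (0:ℝ) ≤ (n:ℝ) := Nat.cast_nonneg n
        have hsq : (n:ℝ)*(n:ℝ) ≤ X*X := mul_le_mul hnX hnX hn0 (by linarith)
        push_cast
        nlinarith [hsq, hnX, hX1]
      calc (P.card : ℝ) ≤ ((n * (6*n+1) : ℕ) : ℝ) := by exact_mod_cast h1
        _ ≤ 7 * X^2 := h2
    have hfinal : (Sn.ncard : ℝ) ≤ 7 * X^2 * (2 * D^2) := by
      calc (Sn.ncard : ℝ) ≤ (T.card : ℝ) := hcount
        _ ≤ (P.card : ℝ) * (2 * D^2) := hTbound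
        _ ≤ 7 * X^2 * (2 * D^2) :=
            mul_le_mul_of_nonneg_right hPcard (by positivity)
    have e0 : (((3:ℝ)*X^3)^(ε/6))^2 = ((3:ℝ)*X^3)^(ε/3) := by
      rw [← Real.rpow_natCast (((3:ℝ)*X^3)^(ε/6)) 2, ← Real.rpow_mul (by positivity)]
      congr 1
      push_cast
      ring
    have e1 : ((3:ℝ) * X^3) ^ (ε/3) = 3^(ε/3) * X^ε := by
      rw [Real.mul_rpow (by norm_num) (by positivity), ← Real.rpow_natCast X 3,
        ← Real.rpow_mul hX0.le]
      congr 1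
      push_cast
      ring
    have e3 : X ^ ((2:ℝ)+ε) = X^2 * X^ε := by
      rw [Real.rpow_add hX0]
      congr 1
      rw [show (2:ℝ) = ((2:ℕ):ℝ) by norm_num, Real.rpow_natCast]
    have e4 : 7 * X^2 * (2 * D^2) = 56 * C₀^2 * 3^(ε/3) * (X^2 * X^ε) := by
      rw [hD, mul_pow, mul_pow, e0, e1]
      ring
    rw [e3, ← e4]
    exact hfinal
  have hupper : S.ncard ≤ Sp.ncard + Sn.ncard := by
    rw [hsplit]; exact Set.ncard_union_le Sp Sn
  have hXe : X ^ 2 ≤ X ^ ((2:ℝ) + ε) := by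
    rw [Real.rpow_add hX0]
    have h1 : X ^ (2:ℝ) = X ^ 2 := by
      rw [show (2:ℝ) = ((2:ℕ):ℝ) by norm_num, Real.rpow_natCast]
    rw [h1]
    nlinarith [Real.one_le_rpow hX1 hε.le, sq_nonneg X, hX0]
  have hNn : (N:ℝ) = (n:ℝ) := by exact_mod_cast hnN.symm
  rw [hNn]
  have hc : (0:ℝ) ≤ 56 * C₀^2 * (3:ℝ)^(ε/3) := by positivity
  have hcard_low : 6 * (((n:ℝ) - 2) * (((n:ℝ) - 1) * (n:ℝ))) ≤ (S.ncard:ℝ) := by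
    have h2 : ((6 * ((n - 2) * ((n - 1) * n)) : ℕ) : ℝ) ≤ (S.ncard : ℝ) := by
      exact_mod_cast hlow
    have h3 : ((6 * ((n - 2) * ((n - 1) * n)) : ℕ) : ℝ)
        = 6 * (((n:ℝ) - 2) * (((n:ℝ) - 1) * (n:ℝ))) := by
      push_cast [Nat.cast_sub (by omega : 2 ≤ n), Nat.cast_sub (by omega : 1 ≤ n)]
      ring
    linarith [h2, h3.symm.le, h3.le]
  have hcard_up : (S.ncard:ℝ)
      ≤ 6*(n:ℝ)^3 + 56 * C₀^2 * (3:ℝ)^(ε/3) * X ^ ((2:ℝ)+ε) := by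
    have h2 : (S.ncard : ℝ) ≤ (Sp.ncard : ℝ) + (Sn.ncard : ℝ) := by exact_mod_cast hupper
    have h4 : (Sp.ncard : ℝ) ≤ 6 * (n:ℝ)^3 := by
      have h3 : ((6 * n ^ 3 : ℕ) : ℝ) = 6 * (n:ℝ)^3 := by push_cast; ring
      rw [← h3]; exact_mod_cast hperm
    linarith [hnon]
  have hn2' : (2:ℝ) ≤ (n:ℝ) := by exact_mod_cast hn2
  generalize hs : ((S.ncard : ℕ) : ℝ) = s at hcard_low hcard_up ⊢
  clear * - hc hcard_low hcard_up hn2' hnX hX0 hX1 hXe hε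
  rw [abs_le]
  constructor
  · have h5 : (n:ℝ)^2 ≤ X^2 := by nlinarith
    nlinarith
  · nlinarith
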